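/- Let C1 > 0 and C2 > 0, and let (a_t) be a real sequence satisfying a_{t+1} = a_t + C1*exp(−C2*a_t) for all t ≥ 0. Then for all t ≥ 0: (1/C2)*ln(exp(C2*a_0) + t*C2*C1) ≤ a_t ≤ (1/C2)*ln(exp(C2*a_0) + t*C2*C1*exp(C2*C1*exp(−C2*a_0))). -/

import Mathlib

private lemma exp_le_one_add_mul_exp (x : ℝ) (hx : 0 ≤ x) :
    Real.exp x ≤ 1 + x * Real.exp x := by
  have h := Real.add_one_le_exp (-x)
  have h2 : Real.exp x * (-x + 1) ≤ Real.exp x * Real.exp (-x) :=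
    mul_le_mul_of_nonneg_left h (Real.exp_pos x).le
  rw [← Real.exp_add] at h2
  simp at h2
  nlinarith [Real.exp_pos x]

/-- growth bounds for the recursion `a_{t+1} = a_t + C1 exp(-C2 a_t)`
with `C1 > 0`. -/
theorem stmt_3 (C1 C2 : ℝ) (hC1 : 0 < C1) (hC2 : 0 < C2) (a : ℕ → ℝ)
    (ha : ∀ t : ℕ, a (t+1) = a t + C1 * Real.exp (-C2 * a t)) :
    ∀ t : ℕ,
      (1/C2) * Real.log (Real.exp (C2 * a 0) + t * C2 * C1) ≤ a t ∧
      a t ≤ (1/C2) * Real.log (Real.exp (C2 * a 0) +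
        t * C2 * C1 * Real.exp (C2 * C1 * Real.exp (-C2 * a 0))) := by
  set E := Real.exp (C2 * C1 * Real.exp (-C2 * a 0)) with hE
  have hEpos : 0 < E := Real.exp_pos _
  have key : ∀ t : ℕ,
      Real.exp (C2 * a 0) + t * C2 * C1 ≤ Real.exp (C2 * a t) ∧
      Real.exp (C2 * a t) ≤ Real.exp (C2 * a 0) + t * C2 * C1 * E := by
    intro t
    induction t with
    | zero => simp
    | succ n ih =>
      obtain ⟨ihl, ihr⟩ := ih
      have hbn : Real.exp (C2 * a 0) ≤ Real.exp (C2 * a n) := by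
        have : (0:ℝ) ≤ n * C2 * C1 := by positivity
        linarith
      have han : a 0 ≤ a n := by
        have := Real.exp_le_exp.mp hbn
        exact le_of_mul_le_mul_left this hC2
      set x := C2 * C1 * Real.exp (-C2 * a n) with hx
      have hxpos : 0 < x := by positivity
      have hsplit : Real.exp (C2 * a (n+1)) = Real.exp (C2 * a n) * Real.exp x := by
        rw [ha n, ← Real.exp_add, hx]; ring_nf
      have hprod : Real.exp (C2 * a n) * x = C2 * C1 := by
        rw [hx]
        rw [show Real.exp (C2 * a n) * (C2 * C1 * Real.exp (-C2 * a n)) =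
          C2 * C1 * (Real.exp (C2 * a n) * Real.exp (-C2 * a n)) by ring,
          ← Real.exp_add]
        simp
      constructor
      · -- lower bound
        have h1 : 1 + x ≤ Real.exp x := by linarith [Real.add_one_le_exp x]
        have h2 : Real.exp (C2 * a n) * (1 + x) ≤ Real.exp (C2 * a n) * Real.exp x :=
          mul_le_mul_of_nonneg_left h1 (Real.exp_pos _).le
        rw [hsplit]
        push_cast
        nlinarith [Real.exp_pos (C2 * a n)]
      · -- upper bound
        have hxE : Real.exp x ≤ E := by
          rw [hE]
          apply Real.exp_le_exp.mpr
          have : Real.exp (-C2 * a n) ≤ Real.exp (-C2 * a 0) := by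
            apply Real.exp_le_exp.mpr
            nlinarith
          exact mul_le_mul_of_nonneg_left this (by positivity)
        have h1 : Real.exp x ≤ 1 + x * Real.exp x := exp_le_one_add_mul_exp x hxpos.le
        have h2 : Real.exp (C2 * a n) * Real.exp x ≤
            Real.exp (C2 * a n) * (1 + x * Real.exp x) :=
          mul_le_mul_of_nonneg_left h1 (Real.exp_pos _).le
        have h3 : Real.exp (C2 * a n) * (1 + x * Real.exp x)
            = Real.exp (C2 * a n) + C2 * C1 * Real.exp x := by
          have : Real.exp (C2 * a n) * (1 + x * Real.exp x)
              = Real.exp (C2 * a n) + (Real.exp (C2 * a n) * x) * Real.exp x := by ring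
          rw [this, hprod]
        have h4 : C2 * C1 * Real.exp x ≤ C2 * C1 * E := by
          apply mul_le_mul_of_nonneg_left hxE (by positivity)
        rw [hsplit]
        push_cast
        linarith
  intro t
  obtain ⟨hl, hr⟩ := key t
  have hpos1 : (0:ℝ) < Real.exp (C2 * a 0) + t * C2 * C1 := by positivity
  constructor
  · rw [div_mul_eq_mul_div, one_mul, div_le_iff₀ hC2]
    calc Real.log (Real.exp (C2 * a 0) + t * C2 * C1)
        ≤ Real.log (Real.exp (C2 * a t)) := Real.log_le_log hpos1 hl
      _ = C2 * a t := Real.log_exp _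
      _ = a t * C2 := by ring
  · rw [div_mul_eq_mul_div, one_mul, le_div_iff₀ hC2]
    calc a t * C2 = Real.log (Real.exp (C2 * a t)) := by rw [Real.log_exp]; ring
      _ ≤ Real.log (Real.exp (C2 * a 0) + t * C2 * C1 * E) :=
          Real.log_le_log (Real.exp_pos _) hr
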